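/- Let f : ℝ → ℝ be twice continuously differentiable with |f(x)| ≤ M₀ for all x and |f''(x)| ≤ M₂ for all x. Then for all x, |f'(x)| ≤ 2√(M₀ M₂). -/

import Mathlib

/-- Landau's interpolation inequality on the real line: if `f` is `C²` with
`|f| ≤ M₀` and `|f''| ≤ M₂` everywhere, then `|f'(x)| ≤ 2√(M₀ M₂)` for every `x`. -/
theorem landau_inequality (f : ℝ → ℝ) (M₀ M₂ : ℝ)
    (hf : ContDiff ℝ 2 f)
    (h0 : ∀ x, |f x| ≤ M₀)
    (h2 : ∀ x, |iteratedDeriv 2 f x| ≤ M₂) :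
    ∀ x, |deriv f x| ≤ 2 * Real.sqrt (M₀ * M₂) := by
  intro x
  have hM0 : 0 ≤ M₀ := le_trans (abs_nonneg _) (h0 0)
  have hM2 : 0 ≤ M₂ := le_trans (abs_nonneg _) (h2 0)
  have hfd : Differentiable ℝ f := hf.differentiable two_ne_zero
  have hf2 : ContDiff ℝ (1 + 1 : ℕ) f := by norm_num; exact hf
  have hgc : ContDiff ℝ 1 (deriv f) := (contDiff_succ_iff_deriv.mp hf2).2.2
  have hgd : Differentiable ℝ (deriv f) := hgc.differentiable one_ne_zero
  have hdg : ∀ y, ‖deriv (deriv f) y‖ ≤ M₂ := by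
    intro y
    have : deriv (deriv f) y = iteratedDeriv 2 f y := by
      rw [iteratedDeriv_succ, iteratedDeriv_one]
    rw [Real.norm_eq_abs, this]; exact h2 y
  -- Lipschitz bound on deriv f
  have hlip : ∀ a b : ℝ, |deriv f a - deriv f b| ≤ M₂ * |a - b| := by
    intro a b
    have := convex_univ.norm_image_sub_le_of_norm_deriv_le
      (f := deriv f) (fun y _ => hgd y) (fun y _ => hdg y)
      (Set.mem_univ b) (Set.mem_univ a)
    simpa [Real.norm_eq_abs] using this
  -- key inequality
  have key : ∀ h : ℝ, 0 < h → |deriv f x| ≤ M₀ / h + M₂ * h := by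
    intro h hh
    set g := deriv f with hg
    set ψ : ℝ → ℝ := fun t => f (x + t) - f (x - t) - 2 * t * g x with hψdef
    have hψ : ∀ t ∈ Set.Icc (0:ℝ) h,
        HasDerivWithinAt ψ (g (x + t) + g (x - t) - 2 * g x) (Set.Icc 0 h) t := by
      intro t _
      have h1 : HasDerivAt (fun t => f (x + t)) (g (x + t)) t := by
        simpa [Function.comp_def] using (HasDerivAt.comp t ((hfd (x + t)).hasDerivAt)
          ((hasDerivAt_id t).const_add x))
      have h2' : HasDerivAt (fun t => f (x - t)) (-g (x - t)) t := by
        have hi : HasDerivAt (fun t : ℝ => x - t) (-1) t := by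
          simpa using ((hasDerivAt_id t).const_sub x)
        simpa [Function.comp_def] using (HasDerivAt.comp t ((hfd (x - t)).hasDerivAt) hi)
      have h3 : HasDerivAt (fun t : ℝ => 2 * t * g x) (2 * g x) t := by
        have heq : (fun t : ℝ => 2 * t * g x) = (fun y : ℝ => (2 * g x) * y) := by
          funext y; ring
        rw [heq]
        simpa using (hasDerivAt_id t).const_mul (2 * g x)
      have := ((h1.sub h2').sub h3)
      simpa [ψ, sub_neg_eq_add, sub_sub, Pi.sub_def, Pi.add_def] using this.hasDerivWithinAt
    have hbound : ∀ t ∈ Set.Icc (0:ℝ) h,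
        ‖g (x + t) + g (x - t) - 2 * g x‖ ≤ 2 * M₂ * h := by
      intro t ht
      have e1 : |g (x + t) - g x| ≤ M₂ * h := by
        calc |g (x + t) - g x| ≤ M₂ * |x + t - x| := hlip _ _
        _ = M₂ * t := by simp [abs_of_nonneg ht.1]
        _ ≤ M₂ * h := by nlinarith [ht.2]
      have e2 : |g (x - t) - g x| ≤ M₂ * h := by
        calc |g (x - t) - g x| ≤ M₂ * |x - t - x| := hlip _ _
        _ = M₂ * t := by simp [abs_of_nonneg ht.1]
        _ ≤ M₂ * h := by nlinarith [ht.2]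
      calc ‖g (x + t) + g (x - t) - 2 * g x‖
          = |(g (x + t) - g x) + (g (x - t) - g x)| := by rw [Real.norm_eq_abs]; ring_nf
        _ ≤ |g (x + t) - g x| + |g (x - t) - g x| := abs_add_le _ _
        _ ≤ 2 * M₂ * h := by linarith
    have hmvt := Convex.norm_image_sub_le_of_norm_hasDerivWithin_le
      hψ hbound (convex_Icc 0 h) (Set.left_mem_Icc.mpr hh.le)
      (Set.right_mem_Icc.mpr hh.le)
    have hψ0 : ψ 0 = 0 := by simp [ψ]
    have hψh : |f (x + h) - f (x - h) - 2 * h * g x| ≤ 2 * M₂ * h * h := by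
      have : ‖ψ h - ψ 0‖ ≤ 2 * M₂ * h * ‖h - (0:ℝ)‖ := hmvt
      simpa [ψ, hψ0, Real.norm_eq_abs, abs_of_pos hh] using this
    have h2h : 2 * h * |g x| ≤ 2 * M₀ + 2 * M₂ * h * h := by
      have := abs_sub_abs_le_abs_sub (2 * h * g x) (f (x + h) - f (x - h))
      have habs : |2 * h * g x| = 2 * h * |g x| := by
        rw [abs_mul, abs_of_pos (by linarith : (0:ℝ) < 2 * h)]
      have hsum : |f (x + h) - f (x - h)| ≤ 2 * M₀ := by
        calc |f (x + h) - f (x - h)| ≤ |f (x + h)| + |f (x - h)| := abs_sub _ _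
          _ ≤ 2 * M₀ := by linarith [h0 (x + h), h0 (x - h)]
      have habs2 : |2 * h * g x - (f (x + h) - f (x - h))|
          = |f (x + h) - f (x - h) - 2 * h * g x| := abs_sub_comm _ _
      linarith [hψh, this, habs.symm ▸ this]
    rw [div_add' _ _ _ hh.ne', le_div_iff₀ hh]
    nlinarith
  rcases eq_or_lt_of_le hM2 with hM2' | hM2'
  · -- M₂ = 0
    have hz : |deriv f x| ≤ 0 := by
      refine le_of_forall_pos_le_add fun ε hε => ?_
      have := key ((M₀ + 1) / ε) (by positivity)
      rw [← hM2'] at this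
      have : |deriv f x| ≤ M₀ / ((M₀ + 1) / ε) := by linarith
      calc |deriv f x| ≤ M₀ / ((M₀ + 1) / ε) := this
        _ = M₀ * ε / (M₀ + 1) := by field_simp
        _ ≤ ε := by rw [div_le_iff₀ (by linarith)]; nlinarith
        _ = 0 + ε := by ring
    have := abs_nonneg (deriv f x)
    have h1 : |deriv f x| = 0 := le_antisymm hz this
    rw [h1]; positivity
  rcases eq_or_lt_of_le hM0 with hM0' | hM0'
  · -- M₀ = 0
    have hz : |deriv f x| ≤ 0 := by
      refine le_of_forall_pos_le_add fun ε hε => ?_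
      have := key (ε / M₂) (by positivity)
      rw [← hM0'] at this
      have h1 : M₂ * (ε / M₂) = ε := by field_simp
      simp only [zero_div, zero_add] at this
      rw [h1] at this
      linarith
    have h1 : |deriv f x| = 0 := le_antisymm hz (abs_nonneg _)
    rw [h1]; positivity
  · -- both positive
    have hs0 : (0:ℝ) < Real.sqrt M₀ := Real.sqrt_pos.mpr hM0'
    have hs2 : (0:ℝ) < Real.sqrt M₂ := Real.sqrt_pos.mpr hM2'
    have hsq0 : Real.sqrt M₀ ^ 2 = M₀ := Real.sq_sqrt hM0
    have hsq2 : Real.sqrt M₂ ^ 2 = M₂ := Real.sq_sqrt hM2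
    have := key (Real.sqrt M₀ / Real.sqrt M₂) (by positivity)
    have hval : M₀ / (Real.sqrt M₀ / Real.sqrt M₂) + M₂ * (Real.sqrt M₀ / Real.sqrt M₂)
        = 2 * (Real.sqrt M₀ * Real.sqrt M₂) := by
      field_simp
      nlinarith [hsq0, hsq2]
    rw [hval] at this
    rwa [Real.sqrt_mul hM0]
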